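/- Let V be a real inner product space with complex structure J (J²=-I, J orthogonal), W a real inner product space, and φ: V × V → W a symmetric bilinear map. Suppose L ⊆ V is a J-invariant subspace such that ⟨φ(X₁,Z₁), φ(X₂,Z₂)⟩ = ⟨φ(X₁,JZ₁), φ(X₂,JZ₂)⟩ for all X₁, X₂ ∈ V and Z₁, Z₂ ∈ L, and the span R₀ of {φ(X,Z) : X ∈ V, Z ∈ L} admits a well-defined map J̃ with J̃φ(X,Z) = φ(X,JZ). Then φ(JZ₁, JZ₂) = -φ(Z₁, Z₂) for all Z₁, Z₂ ∈ L. In particular φ(Z,Z) + φ(JZ,JZ) = 0 for all Z ∈ L. -/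
import Mathlib


open scoped RealInnerProductSpace

/-- the anti-invariance of φ on the J-invariant subspace L. -/
theorem stmt_1
    (V W : Type*) [NormedAddCommGroup V] [InnerProductSpace ℝ V]
    [NormedAddCommGroup W] [InnerProductSpace ℝ W]
    (J : V →ₗ[ℝ] V) (hJ2 : ∀ X : V, J (J X) = -X)
    (hJorth : ∀ X Y : V, ⟪J X, J Y⟫ = ⟪X, Y⟫)
    (φ : V →ₗ[ℝ] V →ₗ[ℝ] W) (hφsymm : ∀ X Y : V, φ X Y = φ Y X)
    (L : Submodule ℝ V) (hLJ : ∀ Z ∈ L, J Z ∈ L)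
    (hflat : ∀ X₁ X₂ : V, ∀ Z₁ ∈ L, ∀ Z₂ ∈ L,
      ⟪φ X₁ Z₁, φ X₂ Z₂⟫ = ⟪φ X₁ (J Z₁), φ X₂ (J Z₂)⟫)
    (Jt : W →ₗ[ℝ] W)
    (hJt : ∀ X : V, ∀ Z ∈ L, Jt (φ X Z) = φ X (J Z))
    (hJtiso : ∀ X₁ X₂ : V, ∀ Z₁ ∈ L, ∀ Z₂ ∈ L,
      ⟪Jt (φ X₁ Z₁), Jt (φ X₂ Z₂)⟫ = ⟪φ X₁ Z₁, φ X₂ Z₂⟫)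
    (hJt2 : ∀ X : V, ∀ Z ∈ L, Jt (Jt (φ X Z)) = -φ X Z) :
    (∀ Z₁ ∈ L, ∀ Z₂ ∈ L, φ (J Z₁) (J Z₂) = -φ Z₁ Z₂) ∧
      ∀ Z ∈ L, φ Z Z + φ (J Z) (J Z) = 0 := by
  have key : ∀ Z₁ ∈ L, ∀ Z₂ ∈ L, φ (J Z₁) (J Z₂) = -φ Z₁ Z₂ := by
    intro Z₁ h1 Z₂ h2
    calc φ (J Z₁) (J Z₂) = Jt (φ (J Z₁) Z₂) := (hJt (J Z₁) Z₂ h2).symm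
      _ = Jt (φ Z₂ (J Z₁)) := by rw [hφsymm]
      _ = Jt (Jt (φ Z₂ Z₁)) := by rw [hJt Z₂ Z₁ h1]
      _ = -φ Z₂ Z₁ := hJt2 Z₂ Z₁ h1
      _ = -φ Z₁ Z₂ := by rw [hφsymm]
  exact ⟨key, fun Z hZ => by rw [key Z hZ Z hZ]; abel⟩
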